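/- Let u ∈ ℬ(ℝⁿ). Then for all x = (x₁,…,xₙ) ∈ [0,∞)ⁿ with x ≠ 0, (u[e])*(x) + (u*[e])*(x) ≤ Σ_{1≤j≤n, x_j≠0} (x_j·ln x_j − x_j), and (u[e])*(0) + (u*[e])*(0) ≤ 0. -/

import Mathlib

open Filter
open scoped BigOperators Topology

noncomputable section

abbrev En (n : ℕ) := EuclideanSpace ℝ (Fin n)

/-- The closed positive orthant `[0,∞)ⁿ`. -/
def orthant (n : ℕ) : Set (En n) := {x | ∀ j, 0 ≤ x j}

/-- `g[e]`, the coordinatewise exponential substitution `g[e](x) = g(e^{x₁},…,e^{xₙ})`. -/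
def expComp {n : ℕ} (g : En n → ℝ) : En n → ℝ := fun x => g (WithLp.toLp 2 (fun j => Real.exp (x j)))

/-- The Young–Fenchel conjugate `g*(x) = sup_y (⟨x,y⟩ - g(y))`. -/
def starC {n : ℕ} (g : En n → ℝ) (x : En n) : ℝ := ⨆ y : En n, (∑ j, x j * y j - g y)

/-- `g ∈ ℬ(ℝⁿ)`: `g` is continuous on `ℝⁿ` and `g(x)/‖x‖ → +∞` as `x → ∞`. -/
def memBR {n : ℕ} (g : En n → ℝ) : Prop :=
  Continuous g ∧ Tendsto (fun x : En n => g x / ‖x‖) (cocompact (En n)) atTop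

lemma inner_sum_le {n : ℕ} (z y : En n) : ∑ j, z j * y j ≤ ‖z‖ * ‖y‖ := by
  have h := real_inner_le_norm z y
  rw [PiLp.inner_apply] at h
  simpa [RCLike.inner_apply, conj_trivial, mul_comm] using h

lemma bddAbove_conj {n : ℕ} (u : En n → ℝ) (hu : memBR u) (z : En n) :
    BddAbove (Set.range fun y : En n => ∑ j, z j * y j - u y) := by
  obtain ⟨hc, ht⟩ := hu
  have h : {y : En n | ‖z‖ + 1 ≤ u y / ‖y‖} ∈ cocompact (En n) :=
    ht (mem_atTop (‖z‖ + 1))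
  rw [mem_cocompact] at h
  obtain ⟨K, hK, hKs⟩ := h
  have hK'c : IsCompact (K ∪ Metric.closedBall (0 : En n) 1) :=
    hK.union (isCompact_closedBall _ _)
  have hcont : Continuous fun y : En n => ∑ j, z j * y j - u y := by
    apply Continuous.sub _ hc
    exact continuous_finset_sum _ fun j _ => (continuous_const.mul ((continuous_apply j).comp (PiLp.continuous_ofLp (p := 2) (β := fun _ : Fin n => ℝ))))
  obtain ⟨M, hM⟩ := (hK'c.image hcont).bddAbove
  refine ⟨max M 0, ?_⟩
  rintro _ ⟨y, rfl⟩
  by_cases hy : y ∈ K ∪ Metric.closedBall (0 : En n) 1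
  · exact le_trans (hM (Set.mem_image_of_mem _ hy)) (le_max_left _ _)
  · rw [Set.mem_union, not_or] at hy
    have hy1 : 1 < ‖y‖ := by
      have := hy.2
      simpa [Metric.mem_closedBall, dist_zero_right] using this
    have hyK : y ∈ Kᶜ := hy.1
    have hub : ‖z‖ + 1 ≤ u y / ‖y‖ := hKs hyK
    have hnorm : (0:ℝ) < ‖y‖ := lt_trans one_pos hy1
    have huy : (‖z‖ + 1) * ‖y‖ ≤ u y := (le_div_iff₀ hnorm).mp hub
    have h2 := inner_sum_le z y
    have : ∑ j, z j * y j - u y ≤ 0 := by nlinarith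
    exact le_trans this (le_max_right _ _)

lemma scalar_bound {a r : ℝ} (ha : 0 ≤ a) :
    a * r - Real.exp r ≤ if a ≠ 0 then a * Real.log a - a else 0 := by
  by_cases h : a = 0
  · simp [h, (Real.exp_pos r).le]
  · simp only [h, ne_eq, not_false_eq_true, if_true]
    have ha' : 0 < a := lt_of_le_of_ne ha (Ne.symm h)
    have h1 : a * Real.exp (r - Real.log a) = Real.exp r := by
      nth_rewrite 1 [← Real.exp_log ha']
      rw [← Real.exp_add]
      congr 1
      ring
    have h2 : r - Real.log a + 1 ≤ Real.exp (r - Real.log a) := Real.add_one_le_exp _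
    nlinarith

theorem stmt12 (n : ℕ) (u : En n → ℝ) (hu : memBR u) :
    (∀ x ∈ orthant n, x ≠ 0 →
      starC (expComp u) x + starC (expComp (starC u)) x ≤
        ∑ j ∈ Finset.univ.filter (fun j : Fin n => x j ≠ 0),
          (x j * Real.log (x j) - x j)) ∧
    starC (expComp u) 0 + starC (expComp (starC u)) 0 ≤ 0 := by
  have key : ∀ x ∈ orthant n,
      starC (expComp u) x + starC (expComp (starC u)) x ≤
        ∑ j ∈ Finset.univ.filter (fun j : Fin n => x j ≠ 0),
          (x j * Real.log (x j) - x j) := by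
    intro x hx
    set C := ∑ j ∈ Finset.univ.filter (fun j : Fin n => x j ≠ 0),
          (x j * Real.log (x j) - x j) with hC
    have hCval : C = ∑ j, (if x j ≠ 0 then x j * Real.log (x j) - x j else 0) := by
      rw [hC, Finset.sum_filter]
    have h1 : starC (expComp u) x ≤ C - starC (expComp (starC u)) x := by
      refine ciSup_le fun s => ?_
      have h2 : starC (expComp (starC u)) x ≤ C - (∑ j, x j * s j - expComp u s) := by
        refine ciSup_le fun t => ?_
        have hle : (∑ j, Real.exp (t j) * Real.exp (s j) - u (WithLp.toLp 2 (fun j => Real.exp (s j))))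
            ≤ starC u (WithLp.toLp 2 (fun j => Real.exp (t j))) := by
          have := le_ciSup (bddAbove_conj u hu (WithLp.toLp 2 (fun j => Real.exp (t j))))
            (WithLp.toLp 2 (fun j => Real.exp (s j)))
          simpa [starC] using this
        have hsum : ∑ j, (x j * (s j + t j) - Real.exp (s j + t j)) ≤ C := by
          rw [hCval]
          exact Finset.sum_le_sum fun j _ => scalar_bound (hx j)
        have e1 : ∑ j, x j * t j + ∑ j, x j * s j - ∑ j, Real.exp (t j) * Real.exp (s j)
            = ∑ j, (x j * (s j + t j) - Real.exp (s j + t j)) := by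
          rw [← Finset.sum_add_distrib, ← Finset.sum_sub_distrib]
          exact Finset.sum_congr rfl fun j _ => by rw [Real.exp_add]; ring
        show ∑ j, x j * t j - expComp (starC u) t ≤ _
        have : expComp (starC u) t = starC u (WithLp.toLp 2 (fun j => Real.exp (t j))) := rfl
        rw [this]
        have : expComp u s = u (WithLp.toLp 2 (fun j => Real.exp (s j))) := rfl
        rw [this]
        linarith
      have h3 : ∑ j, x j * s j - expComp u s ≤ C - starC (expComp (starC u)) x := by
        linarith
      exact h3
    linarith [h1]
  constructor
  · intro x hx _; exact key x hx
  · have h0 : (0 : En n) ∈ orthant n := fun j => le_refl _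
    have := key 0 h0
    have hempty : (Finset.univ.filter (fun j : Fin n => (0 : En n) j ≠ 0)) = ∅ := by
      ext j; simp [show ∀ j, (0 : En n) j = 0 from fun _ => rfl]
    rw [hempty, Finset.sum_empty] at this
    exact this
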